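/- Let k be a positive integer, let r and s be positive real numbers, and let w : ℝ → ℝ satisfy w(x+2k) = -r·w(x+k) + s·w(x) for all real x. Assume w(x) ≠ 0 for all real x and w(x+k)/w(x) ≠ (-r + √(r² + 4s))/2 for all real x. Then for every real number x, the sequence n ↦ w(x+(n+1)k)/w(x+nk) converges to -ρ := -(r + √(r² + 4s))/2 as n → ∞. -/

import Mathlib

theorem stmt_14 (k : ℕ) (hk : 0 < k) (r s : ℝ) (hr : 0 < r) (hs : 0 < s)
    (w : ℝ → ℝ)
    (hw : ∀ x : ℝ, w (x + 2 * (k : ℝ)) = -r * w (x + (k : ℝ)) + s * w x)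
    (hne : ∀ x : ℝ, w x ≠ 0)
    (hratio : ∀ x : ℝ, w (x + (k : ℝ)) / w x ≠ (-r + Real.sqrt (r ^ 2 + 4 * s)) / 2) :
    ∀ x : ℝ,
      Filter.Tendsto (fun n : ℕ => w (x + ((n : ℝ) + 1) * (k : ℝ)) / w (x + (n : ℝ) * (k : ℝ)))
        Filter.atTop (nhds (-((r + Real.sqrt (r ^ 2 + 4 * s)) / 2))) := by
  intro x
  obtain ⟨D, hDdef⟩ : ∃ D : ℝ, D = Real.sqrt (r ^ 2 + 4 * s) := ⟨_, rfl⟩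
  have hD2 : D ^ 2 = r ^ 2 + 4 * s := by rw [hDdef]; exact Real.sq_sqrt (by positivity)
  have hDnn : 0 ≤ D := hDdef ▸ Real.sqrt_nonneg _
  have hDr : r < D := by nlinarith
  obtain ⟨α, hαdef⟩ : ∃ a : ℝ, a = (-r + D) / 2 := ⟨_, rfl⟩
  obtain ⟨β, hβdef⟩ : ∃ b : ℝ, b = -((r + D) / 2) := ⟨_, rfl⟩
  have hαpos : 0 < α := by rw [hαdef]; linarith
  have hβneg : β < 0 := by rw [hβdef]; linarith
  have hβne : β ≠ 0 := ne_of_lt hβneg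
  have hαβ : α ≠ β := by linarith
  have hα2 : α ^ 2 = -r * α + s := by rw [hαdef]; nlinarith
  have hβ2 : β ^ 2 = -r * β + s := by rw [hβdef]; nlinarith
  -- the sequence
  obtain ⟨u, hudef⟩ : ∃ u : ℕ → ℝ, u = fun n : ℕ => w (x + (n : ℝ) * k) := ⟨_, rfl⟩
  have hune : ∀ n, u n ≠ 0 := by intro n; rw [hudef]; exact hne _
  have hrec : ∀ n, u (n + 2) = -r * u (n + 1) + s * u n := by
    intro n
    have h := hw (x + (n : ℝ) * k)
    have e2 : x + (n : ℝ) * k + 2 * (k : ℝ) = x + ((n : ℕ) + 2 : ℕ) * k := by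
      push_cast; ring
    have e1 : x + (n : ℝ) * k + (k : ℝ) = x + ((n : ℕ) + 1 : ℕ) * k := by
      push_cast; ring
    rw [e2, e1] at h
    simpa [hudef] using h
  obtain ⟨A, hAdef⟩ : ∃ a : ℝ, a = (u 1 - β * u 0) / (α - β) := ⟨_, rfl⟩
  obtain ⟨B, hBdef⟩ : ∃ b : ℝ, b = (α * u 0 - u 1) / (α - β) := ⟨_, rfl⟩
  have hαβne : α - β ≠ 0 := sub_ne_zero.mpr hαβ
  have hclosed : ∀ n, u n = A * α ^ n + B * β ^ n := by
    have key : ∀ n, u n = A * α ^ n + B * β ^ n ∧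
        u (n + 1) = A * α ^ (n + 1) + B * β ^ (n + 1) := by
      intro n
      induction n with
      | zero =>
        constructor
        · simp only [pow_zero, mul_one, hAdef, hBdef]
          field_simp
          ring
        · simp only [pow_one, pow_zero, mul_one, hAdef, hBdef]
          field_simp
          ring
      | succ m ih =>
        refine ⟨ih.2, ?_⟩
        have h := hrec m
        rw [ih.1, ih.2] at h
        rw [h]
        linear_combination (-(A * α ^ m)) * hα2 + (-(B * β ^ m)) * hβ2
    exact fun n => (key n).1
  have hBne : B ≠ 0 := by
    have h0 : u 0 ≠ 0 := hune 0
    have hr1 : u 1 / u 0 ≠ α := by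
      have h := hratio x
      have e0 : x + ((0 : ℕ) : ℝ) * k = x := by push_cast; ring
      have e1 : x + ((1 : ℕ) : ℝ) * k = x + (k : ℝ) := by push_cast; ring
      rw [hudef, hαdef, hDdef]
      simpa [e0, e1] using h
    intro hB
    apply hr1
    rw [hBdef] at hB
    have h1 : α * u 0 - u 1 = 0 := by
      field_simp at hB
      linarith
    field_simp
    linarith
  -- factor
  obtain ⟨c, hcdef⟩ : ∃ c : ℝ, c = A / B := ⟨_, rfl⟩
  obtain ⟨q, hqdef⟩ : ∃ q : ℝ, q = α / β := ⟨_, rfl⟩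
  have hfac : ∀ n, u n = B * β ^ n * (c * q ^ n + 1) := by
    intro n
    rw [hclosed n, hcdef, hqdef, div_pow]
    have hβpn : β ^ n ≠ 0 := pow_ne_zero _ hβne
    field_simp
  have hfacne : ∀ n, c * q ^ n + 1 ≠ 0 := by
    intro n h
    have h2 := hune n
    rw [hfac n, h, mul_zero] at h2
    exact h2 rfl
  have hratio_eq : ∀ n, u (n + 1) / u n = β * (c * (q ^ n * q) + 1) / (c * q ^ n + 1) := by
    intro n
    rw [div_eq_div_iff (hune n) (hfacne n)]
    rw [hfac n, hfac (n + 1)]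
    ring
  have hq1 : |q| < 1 := by
    rw [hqdef, abs_div, abs_of_pos hαpos, abs_of_neg hβneg]
    rw [div_lt_one (by linarith)]
    rw [hαdef, hβdef]
    linarith
  have hq0 : Filter.Tendsto (fun n : ℕ => q ^ n) Filter.atTop (nhds 0) :=
    tendsto_pow_atTop_nhds_zero_of_abs_lt_one hq1
  have hlim : Filter.Tendsto (fun n : ℕ => β * (c * (q ^ n * q) + 1) / (c * q ^ n + 1))
      Filter.atTop (nhds β) := by
    have hnum : Filter.Tendsto (fun n : ℕ => β * (c * (q ^ n * q) + 1)) Filter.atTop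
        (nhds (β * (c * (0 * q) + 1))) := by
      apply Filter.Tendsto.const_mul
      apply Filter.Tendsto.add_const
      exact (hq0.mul_const q).const_mul c
    have hden : Filter.Tendsto (fun n : ℕ => c * q ^ n + 1) Filter.atTop
        (nhds (c * 0 + 1)) := by
      apply Filter.Tendsto.add_const
      exact hq0.const_mul c
    have h := hnum.div hden (by norm_num)
    simp only [zero_mul, mul_zero, zero_add, mul_one, div_one] at h
    exact h
  have hgoal : Filter.Tendsto (fun n : ℕ => u (n + 1) / u n) Filter.atTop (nhds β) := by
    simpa only [hratio_eq] using hlim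
  have heq : (fun n : ℕ => w (x + ((n : ℝ) + 1) * (k : ℝ)) / w (x + (n : ℝ) * (k : ℝ)))
      = fun n : ℕ => u (n + 1) / u n := by
    funext n
    rw [hudef]
    congr 2
    push_cast
    ring
  rw [heq, ← hDdef, ← hβdef]
  exact hgoal
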